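/- 𝒦-continuity of the t-step output map: Let the system be i-IOSS with functions β ∈ 𝒦ℒ, γ₁, γ₂ ∈ 𝒦, and let h be 𝒦-continuous with α_h ∈ 𝒦. Then for every t ∈ ℕ there exists α_{h_t} ∈ 𝒦 such that for all x₀₁, x₀₂ ∈ ℝⁿ and all input sequences w₁, w₂: |h(x(t; x₀₁, w₁)) − h(x(t; x₀₂, w₂))| ≤ α_{h_t}(|x₀₁ − x₀₂| + Σ_{τ=0}^{t−1} |w₁(τ) − w₂(τ)|). Consequently, for every finite t* ∈ ℕ there exists a single α̃_h ∈ 𝒦 such that this bound holds with α̃_h in place of α_{h_t} for all t < t*. -/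

import Mathlib

open Set Filter

noncomputable section

/-- `Vec m` is `ℝ^m` with the Euclidean norm. -/
abbrev Vec (m : ℕ) := EuclideanSpace ℝ (Fin m)

/-- A function `φ : ℝ≥0 → ℝ≥0` is of class 𝒦 (modeled on `ℝ`, restricted to `[0,∞)`):
continuous, strictly increasing and `φ 0 = 0`. -/
def IsClassK (φ : ℝ → ℝ) : Prop :=
  ContinuousOn φ (Ici 0) ∧ StrictMonoOn φ (Ici 0) ∧ φ 0 = 0

/-- A function `σ : ℕ → ℝ≥0` is of class ℒ: non-increasing with limit `0`. -/
def IsClassL (σ : ℕ → ℝ) : Prop :=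
  (∀ t, 0 ≤ σ t) ∧ Antitone σ ∧ Tendsto σ atTop (nhds 0)

/-- Class 𝒦ℒ. -/
def IsClassKL (β : ℝ → ℕ → ℝ) : Prop :=
  (∀ t, IsClassK fun s => β s t) ∧ ∀ s, 0 ≤ s → IsClassL fun t => β s t

/-- Solution map of `x(t+1) = f(x(t), w(t))`, `x(0) = x₀`. -/
def sol {n q : ℕ} (f : Vec n → Vec q → Vec n) (x0 : Vec n) (w : ℕ → Vec q) : ℕ → Vec n
  | 0 => x0
  | t + 1 => f (sol f x0 w t) (w t)

/-- `|Δx(t)|`. -/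
def nDx {n q : ℕ} (f : Vec n → Vec q → Vec n) (x01 x02 : Vec n) (w1 w2 : ℕ → Vec q)
    (t : ℕ) : ℝ :=
  ‖sol f x01 w1 t - sol f x02 w2 t‖

/-- `|Δh(Δx(t))|`. -/
def nDy {n q p : ℕ} (f : Vec n → Vec q → Vec n) (h : Vec n → Vec p)
    (x01 x02 : Vec n) (w1 w2 : ℕ → Vec q) (t : ℕ) : ℝ :=
  ‖h (sol f x01 w1 t) - h (sol f x02 w2 t)‖

/-- `|Δw(t)|`. -/
def nDw {q : ℕ} (w1 w2 : ℕ → Vec q) (t : ℕ) : ℝ := ‖w1 t - w2 t‖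

/-- `sup_{0 ≤ τ < t} g τ` (empty sup is `0` by the `Real.sSup` convention). -/
def supLt (t : ℕ) (g : ℕ → ℝ) : ℝ := sSup (g '' {τ | τ < t})

/-- `sup_{τ ∈ S, τ < t} g τ`. -/
def supMem (S : Set ℕ) (t : ℕ) (g : ℕ → ℝ) : ℝ := sSup (g '' {τ | τ ∈ S ∧ τ < t})

/-- Time-discounted max over `0 ≤ τ < t` of `β (g τ) (t - τ - 1)`. -/
def dmaxLt (t : ℕ) (g : ℕ → ℝ) (β : ℝ → ℕ → ℝ) : ℝ :=
  sSup ((fun τ => β (g τ) (t - τ - 1)) '' {τ | τ < t})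

/-- Time-discounted max over `τ ∈ S, τ < t` of `β (g τ) (t - τ - 1)`. -/
def dmaxMem (S : Set ℕ) (t : ℕ) (g : ℕ → ℝ) (β : ℝ → ℕ → ℝ) : ℝ :=
  sSup ((fun τ => β (g τ) (t - τ - 1)) '' {τ | τ ∈ S ∧ τ < t})

/-- `t^i_j = δ_i + ⋯ + δ_{i+j-1}` (the sequence `δ` is 1-based; `δ 0` is unused). -/
def sampT (δ : ℕ → ℕ) (i j : ℕ) : ℕ := ∑ r ∈ Finset.range j, δ (i + r)

/-- The sampling set `K_i = {t^i_j : j ≥ 1}`. -/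
def sampSet (δ : ℕ → ℕ) (i : ℕ) : Set ℕ := {m | ∃ j, 1 ≤ j ∧ m = sampT δ i j}

/-- The i-IOSS bound with given comparison functions. -/
def iIOSSBound {n q p : ℕ} (f : Vec n → Vec q → Vec n) (h : Vec n → Vec p)
    (β : ℝ → ℕ → ℝ) (γ1 γ2 : ℝ → ℝ) : Prop :=
  ∀ x01 x02 w1 w2 t,
    nDx f x01 x02 w1 w2 t ≤
      max (β ‖x01 - x02‖ t)
        (max (γ1 (supLt t (nDw w1 w2))) (γ2 (supLt t (nDy f h x01 x02 w1 w2))))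

/-- The sample-based i-IOSS bound w.r.t. the sampling set generated by `δ`. -/
def sampledIOSSBound {n q p : ℕ} (f : Vec n → Vec q → Vec n) (h : Vec n → Vec p)
    (δ : ℕ → ℕ) (β : ℝ → ℕ → ℝ) (γ1 γ2 : ℝ → ℝ) : Prop :=
  ∀ i, 1 ≤ i → ∀ x01 x02 w1 w2 t,
    nDx f x01 x02 w1 w2 t ≤
      max (β ‖x01 - x02‖ t)
        (max (γ1 (supLt t (nDw w1 w2)))
             (γ2 (supMem (sampSet δ i) t (nDy f h x01 x02 w1 w2))))

/-- The sample-based i-IOSS bound on an input set `W`. -/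
def sampledIOSSBoundOn {n q p : ℕ} (f : Vec n → Vec q → Vec n) (h : Vec n → Vec p)
    (W : Set (ℕ → Vec q)) (δ : ℕ → ℕ) (β : ℝ → ℕ → ℝ) (γ1 γ2 : ℝ → ℝ) : Prop :=
  ∀ i, 1 ≤ i → ∀ x01 x02, ∀ w1 ∈ W, ∀ w2 ∈ W, ∀ t,
    nDx f x01 x02 w1 w2 t ≤
      max (β ‖x01 - x02‖ t)
        (max (γ1 (supLt t (nDw w1 w2)))
             (γ2 (supMem (sampSet δ i) t (nDy f h x01 x02 w1 w2))))

/-- The sample-based time-discounted i-IOSS bound. -/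
def sampledTDBound {n q p : ℕ} (f : Vec n → Vec q → Vec n) (h : Vec n → Vec p)
    (δ : ℕ → ℕ) (βx βu βy : ℝ → ℕ → ℝ) : Prop :=
  ∀ i, 1 ≤ i → ∀ x01 x02 w1 w2 t,
    nDx f x01 x02 w1 w2 t ≤
      max (βx ‖x01 - x02‖ t)
        (max (dmaxLt t (nDw w1 w2) βu)
             (dmaxMem (sampSet δ i) t (nDy f h x01 x02 w1 w2) βy))

/-- The sample-based time-discounted i-IOSS bound on an input set `W`. -/
def sampledTDBoundOn {n q p : ℕ} (f : Vec n → Vec q → Vec n) (h : Vec n → Vec p)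
    (W : Set (ℕ → Vec q)) (δ : ℕ → ℕ) (βx βu βy : ℝ → ℕ → ℝ) : Prop :=
  ∀ i, 1 ≤ i → ∀ x01 x02, ∀ w1 ∈ W, ∀ w2 ∈ W, ∀ t,
    nDx f x01 x02 w1 w2 t ≤
      max (βx ‖x01 - x02‖ t)
        (max (dmaxLt t (nDw w1 w2) βu)
             (dmaxMem (sampSet δ i) t (nDy f h x01 x02 w1 w2) βy))

/-- `(x₀₁, x₀₂, w₁, w₂)` generates a pair of i-ISS trajectories relative to `(β, γ1, σ1)`. -/
def pairISS {n q : ℕ} (f : Vec n → Vec q → Vec n) (β : ℝ → ℕ → ℝ) (γ1 : ℝ → ℝ)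
    (σ1 : ℕ → ℝ) (x01 x02 : Vec n) (w1 w2 : ℕ → Vec q) : Prop :=
  ∀ t, nDx f x01 x02 w1 w2 t ≤
    max (β ‖x01 - x02‖ t)
      (sSup ((fun τ => γ1 (nDw w1 w2 τ) * σ1 (t - τ - 1)) '' {τ | τ < t}))

lemma isClassK_id : IsClassK (fun s : ℝ => s) :=
  ⟨continuousOn_id, fun _ _ _ _ h => h, rfl⟩

lemma IsClassK.mono_le {φ : ℝ → ℝ} (hφ : IsClassK φ) {a b : ℝ} (ha : 0 ≤ a) (hab : a ≤ b) :
    φ a ≤ φ b :=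
  hφ.2.1.monotoneOn ha (le_trans ha hab) hab

lemma IsClassK.nonneg {φ : ℝ → ℝ} (hφ : IsClassK φ) {a : ℝ} (ha : 0 ≤ a) : 0 ≤ φ a :=
  hφ.2.2 ▸ hφ.mono_le le_rfl ha

lemma IsClassK.add {φ ψ : ℝ → ℝ} (hφ : IsClassK φ) (hψ : IsClassK ψ) :
    IsClassK (fun s => φ s + ψ s) := by
  refine ⟨hφ.1.add hψ.1, fun a ha b hb hab => ?_, show φ 0 + ψ 0 = 0 by rw [hφ.2.2, hψ.2.2, add_zero]⟩
  exact add_lt_add (hφ.2.1 ha hb hab) (hψ.2.1 ha hb hab)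

lemma IsClassK.comp {φ ψ : ℝ → ℝ} (hφ : IsClassK φ) (hψ : IsClassK ψ) :
    IsClassK (fun s => φ (ψ s)) := by
  refine ⟨hφ.1.comp hψ.1 (fun s hs => hψ.nonneg hs), fun a ha b hb hab => ?_,
    show φ (ψ 0) = 0 by rw [hψ.2.2, hφ.2.2]⟩
  exact hφ.2.1 (hψ.nonneg ha) (hψ.nonneg hb) (hψ.2.1 ha hb hab)

lemma supLt_nonneg (t : ℕ) (g : ℕ → ℝ) (hg : ∀ τ, 0 ≤ g τ) : 0 ≤ supLt t g := by
  rcases Nat.eq_zero_or_pos t with rfl | ht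
  · have : {τ : ℕ | τ < 0} = ∅ := by simp
    simp [supLt, this, Real.sSup_empty]
  · refine le_trans (hg 0) (le_csSup ?_ ⟨0, ht, rfl⟩)
    exact (Set.Finite.image _ (Set.finite_Iio t)).bddAbove

lemma isClassK_one_add_sum {ι : Type*} (F : Finset ι) (g : ι → ℝ → ℝ)
    (hg : ∀ i ∈ F, IsClassK (g i)) :
    IsClassK (fun s => s + ∑ i ∈ F, g i s) := by
  classical
  induction F using Finset.induction with
  | empty => simpa using isClassK_id
  | @insert a F ha ih =>
    have h1 : IsClassK (fun s => g a s + (s + ∑ i ∈ F, g i s)) :=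
      (hg a (Finset.mem_insert_self a F)).add
        (ih fun i hi => hg i (Finset.mem_insert_of_mem hi))
    have : (fun s => g a s + (s + ∑ i ∈ F, g i s)) =
        (fun s => s + ∑ i ∈ insert a F, g i s) := by
      funext s; rw [Finset.sum_insert ha]; ring
    rwa [this] at h1

/-- 𝒦-continuity of the `t`-step output map, and a uniform bound on any finite horizon. -/
theorem t_step_output_map_K_continuous {n q p : ℕ}
    (f : Vec n → Vec q → Vec n) (h : Vec n → Vec p)
    (β : ℝ → ℕ → ℝ) (γ1 γ2 : ℝ → ℝ)
    (hβ : IsClassKL β) (hγ1 : IsClassK γ1) (hγ2 : IsClassK γ2)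
    (hiIOSS : iIOSSBound f h β γ1 γ2)
    (αh : ℝ → ℝ) (hαh : IsClassK αh)
    (hKcont : ∀ x1 x2 : Vec n, ‖h x1 - h x2‖ ≤ αh ‖x1 - x2‖) :
    (∀ t : ℕ, ∃ αht : ℝ → ℝ, IsClassK αht ∧
      ∀ (x01 x02 : Vec n) (w1 w2 : ℕ → Vec q),
        ‖h (sol f x01 w1 t) - h (sol f x02 w2 t)‖ ≤
          αht (‖x01 - x02‖ + ∑ τ ∈ Finset.range t, ‖w1 τ - w2 τ‖)) ∧
    ∀ tstar : ℕ, ∃ αt : ℝ → ℝ, IsClassK αt ∧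
      ∀ t, t < tstar → ∀ (x01 x02 : Vec n) (w1 w2 : ℕ → Vec q),
        ‖h (sol f x01 w1 t) - h (sol f x02 w2 t)‖ ≤
          αt (‖x01 - x02‖ + ∑ τ ∈ Finset.range t, ‖w1 τ - w2 τ‖) := by
  have key : ∀ t : ℕ, ∃ ψ : ℝ → ℝ, IsClassK ψ ∧
      ∀ (x01 x02 : Vec n) (w1 w2 : ℕ → Vec q), ∀ τ ≤ t,
        nDx f x01 x02 w1 w2 τ ≤
          ψ (‖x01 - x02‖ + ∑ r ∈ Finset.range t, ‖w1 r - w2 r‖) := by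
    intro t
    induction t with
    | zero =>
      refine ⟨fun s => s, isClassK_id, ?_⟩
      intro x01 x02 w1 w2 τ hτ
      interval_cases τ
      simp [nDx, sol]
    | succ t ih =>
      obtain ⟨ψ, hψK, hψ⟩ := ih
      refine ⟨fun s => ψ s + (β s 0 + (γ1 s + γ2 (αh (ψ s)))), ?_, ?_⟩
      · exact hψK.add ((hβ.1 0).add (hγ1.add (hγ2.comp (hαh.comp hψK))))
      · intro x01 x02 w1 w2 τ hτ
        set S : ℝ := ‖x01 - x02‖ + ∑ r ∈ Finset.range (t + 1), ‖w1 r - w2 r‖ with hSdef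
        have hsum_nonneg : (0:ℝ) ≤ ∑ r ∈ Finset.range (t + 1), ‖w1 r - w2 r‖ :=
          Finset.sum_nonneg fun _ _ => norm_nonneg _
        have hS0 : 0 ≤ S := add_nonneg (norm_nonneg _) hsum_nonneg
        have hStp0 : (0:ℝ) ≤ ‖x01 - x02‖ + ∑ r ∈ Finset.range t, ‖w1 r - w2 r‖ :=
          add_nonneg (norm_nonneg _) (Finset.sum_nonneg fun _ _ => norm_nonneg _)
        have hSt : ‖x01 - x02‖ + ∑ r ∈ Finset.range t, ‖w1 r - w2 r‖ ≤ S := by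
          apply add_le_add_right
          exact Finset.sum_le_sum_of_subset_of_nonneg
            (Finset.range_subset_range.mpr (Nat.le_succ t)) (fun _ _ _ => norm_nonneg _)
        have hψS0 : 0 ≤ ψ S := hψK.nonneg hS0
        have hβ0 : 0 ≤ β S 0 := (hβ.1 0).nonneg hS0
        have hγ1S : 0 ≤ γ1 S := hγ1.nonneg hS0
        have hαψ0 : 0 ≤ αh (ψ S) := hαh.nonneg hψS0
        have hγ2S : 0 ≤ γ2 (αh (ψ S)) := hγ2.nonneg hαψ0
        have hprev : ∀ τ' ≤ t, nDx f x01 x02 w1 w2 τ' ≤ ψ S := fun τ' hτ' =>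
          (hψ x01 x02 w1 w2 τ' hτ').trans (hψK.mono_le hStp0 hSt)
        rcases Nat.lt_or_ge τ (t + 1) with hlt | hge
        · exact (hprev τ (Nat.lt_succ_iff.mp hlt)).trans
            (le_add_of_nonneg_right (by positivity))
        · have hτeq : τ = t + 1 := le_antisymm hτ hge
          subst hτeq
          refine (hiIOSS x01 x02 w1 w2 (t + 1)).trans
            (show _ ≤ ψ S + (β S 0 + (γ1 S + γ2 (αh (ψ S)))) from ?_)
          apply max_le
          · have h1 : β ‖x01 - x02‖ (t + 1) ≤ β ‖x01 - x02‖ 0 :=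
              ((hβ.2 _ (norm_nonneg _)).2.1) (Nat.zero_le _)
            have h2 : β ‖x01 - x02‖ 0 ≤ β S 0 :=
              (hβ.1 0).mono_le (norm_nonneg _) (le_add_of_nonneg_right hsum_nonneg)
            linarith
          apply max_le
          · have hsupw0 : 0 ≤ supLt (t + 1) (nDw w1 w2) :=
              supLt_nonneg _ _ fun τ => norm_nonneg _
            have hsupw : supLt (t + 1) (nDw w1 w2) ≤ S := by
              apply Real.sSup_le _ hS0
              rintro x ⟨τ', hτ', rfl⟩
              have h3 : nDw w1 w2 τ' ≤ ∑ r ∈ Finset.range (t + 1), ‖w1 r - w2 r‖ :=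
                Finset.single_le_sum (fun i _ => norm_nonneg (w1 i - w2 i))
                  (Finset.mem_range.mpr hτ')
              exact h3.trans (le_add_of_nonneg_left (norm_nonneg _))
            have := hγ1.mono_le hsupw0 hsupw
            linarith
          · have hsupy0 : 0 ≤ supLt (t + 1) (nDy f h x01 x02 w1 w2) :=
              supLt_nonneg _ _ fun τ => norm_nonneg _
            have hsupy : supLt (t + 1) (nDy f h x01 x02 w1 w2) ≤ αh (ψ S) := by
              apply Real.sSup_le _ hαψ0
              rintro x ⟨τ', hτ', rfl⟩
              exact (hKcont _ _).trans
                (hαh.mono_le (norm_nonneg _) (hprev τ' (Nat.lt_succ_iff.mp hτ')))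
            have := hγ2.mono_le hsupy0 hsupy
            linarith
  have part1 : ∀ t : ℕ, ∃ αht : ℝ → ℝ, IsClassK αht ∧
      ∀ (x01 x02 : Vec n) (w1 w2 : ℕ → Vec q),
        ‖h (sol f x01 w1 t) - h (sol f x02 w2 t)‖ ≤
          αht (‖x01 - x02‖ + ∑ τ ∈ Finset.range t, ‖w1 τ - w2 τ‖) := by
    intro t
    obtain ⟨ψ, hψK, hψ⟩ := key t
    refine ⟨fun s => αh (ψ s), hαh.comp hψK, fun x01 x02 w1 w2 => ?_⟩
    exact (hKcont _ _).trans
      (hαh.mono_le (norm_nonneg _) (hψ x01 x02 w1 w2 t le_rfl))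
  refine ⟨part1, fun tstar => ?_⟩
  choose αht hK hB using part1
  refine ⟨fun s => s + ∑ t ∈ Finset.range tstar, αht t s,
    isClassK_one_add_sum _ _ (fun t _ => hK t), ?_⟩
  intro t ht x01 x02 w1 w2
  set s : ℝ := ‖x01 - x02‖ + ∑ τ ∈ Finset.range t, ‖w1 τ - w2 τ‖ with hs
  have hs0 : 0 ≤ s := add_nonneg (norm_nonneg _) (Finset.sum_nonneg fun _ _ => norm_nonneg _)
  refine (hB t x01 x02 w1 w2).trans ?_
  have h1 : αht t s ≤ ∑ t' ∈ Finset.range tstar, αht t' s :=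
    Finset.single_le_sum (fun i _ => (hK i).nonneg hs0) (Finset.mem_range.mpr ht)
  exact h1.trans (le_add_of_nonneg_left hs0)
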